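/- Let a, b and n > 3 be positive integers, let k be a field, and let I_2(Y) ⊆ k[x_1,…,x_n] be the ideal generated by the binomials x_{j+1}·x_k^b − x_j^b·x_{k+1} for 1 ≤ j < k ≤ n-1. Then I_2(Y) is saturated with respect to every variable: for every m ∈ {1,…,n}, every e ≥ 0 and every f ∈ k[x_1,…,x_n], if x_m^e·f ∈ I_2(Y) then f ∈ I_2(Y). -/

import Mathlib

/-- The ℓ-th repunit in base `b`: `r_b(ℓ) = ∑_{j=0}^{ℓ-1} b^j`, with `r_b(0) = 0`. -/
def rep (b ℓ : ℕ) : ℕ := ∑ j ∈ Finset.range ℓ, b ^ j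

/-- The variable `x_m` (1-indexed, `1 ≤ m ≤ n`) of `K[x_1, …, x_n]`. -/
noncomputable def xv (K : Type*) [Field K] (n m : ℕ) : MvPolynomial (Fin n) K :=
  if h : m - 1 < n then MvPolynomial.X ⟨m - 1, h⟩ else 0

/-- The set of 2×2 minors of the matrix `Y` with rows `(x_1^b, …, x_{n-1}^b)` and
`(x_2, …, x_n)`, i.e. the binomials `x_{j+1}·x_l^b − x_j^b·x_{l+1}` for `1 ≤ j < l ≤ n-1`. -/
def minorsY (K : Type*) [Field K] (b n : ℕ) : Set (MvPolynomial (Fin n) K) :=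
  { f | ∃ j l : ℕ, 1 ≤ j ∧ j < l ∧ l ≤ n - 1 ∧
      f = xv K n (j + 1) * xv K n l ^ b - xv K n j ^ b * xv K n (l + 1) }

namespace Stmt11Aux

lemma rep_zero (b : ℕ) : rep b 0 = 0 := by simp [rep]

lemma rep_succ (b ℓ : ℕ) : rep b (ℓ + 1) = b * rep b ℓ + 1 := by
  unfold rep
  rw [Finset.sum_range_succ']
  simp [Finset.mul_sum, pow_succ, mul_comm]

lemma rep_one (b : ℕ) : rep b 1 = 1 := by simp [rep]

lemma rep_mono (b : ℕ) : Monotone (rep b) := by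
  intro i j hij
  exact Finset.sum_le_sum_of_subset (Finset.range_subset_range.mpr hij)

lemma one_le_rep (b ℓ : ℕ) (hℓ : 1 ≤ ℓ) : 1 ≤ rep b ℓ := by
  calc 1 = rep b 1 := (rep_one b).symm
  _ ≤ rep b ℓ := rep_mono b hℓ

lemma add_one_le_rep (b ℓ : ℕ) (hℓ : 2 ≤ ℓ) : b + 1 ≤ rep b ℓ := by
  have h : rep b 2 = b + 1 := by
    rw [show (2:ℕ) = 1 + 1 from rfl, rep_succ, rep_one]; ring
  calc b + 1 = rep b 2 := h.symm
  _ ≤ rep b ℓ := rep_mono b hℓ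

/-- If `u` is standard, bounded below `n`, and has a nonzero entry at index ≥ 2,
then its degree is strictly less than its weight. -/
lemma lt_q (b n : ℕ) (hb : 0 < b) (u : ℕ → ℕ)
    (hbd : ∀ i, n ≤ i → u i = 0)
    (hstd : ∀ i j, i + 2 ≤ j → b ≤ u i → u j = 0)
    (j : ℕ) (hj2 : 2 ≤ j) (hju : u j ≠ 0) :
    ∑ i ∈ Finset.range n, u i < ∑ i ∈ Finset.range n, u i * rep b i := by
  have hjn : j < n := by
    by_contra hc; exact hju (hbd j (le_of_not_gt hc))
  have hu0 : u 0 < b := by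
    by_contra hc
    exact hju (hstd 0 j (by omega) (le_of_not_gt hc))
  have h0mem : (0:ℕ) ∈ Finset.range n := Finset.mem_range.mpr (by omega)
  set s := (Finset.range n).erase 0 with hs
  have hjs : j ∈ s := Finset.mem_erase.mpr ⟨by omega, Finset.mem_range.mpr hjn⟩
  have hp : ∑ i ∈ Finset.range n, u i = u 0 + ∑ i ∈ s, u i :=
    (Finset.add_sum_erase _ u h0mem).symm
  have hq : ∑ i ∈ Finset.range n, u i * rep b i = ∑ i ∈ s, u i * rep b i := by
    rw [← Finset.add_sum_erase _ (fun i => u i * rep b i) h0mem, rep_zero]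
    ring
  have hsplit1 : ∑ i ∈ s, u i = u j + ∑ i ∈ s.erase j, u i :=
    (Finset.add_sum_erase _ u hjs).symm
  have hsplit2 : ∑ i ∈ s, u i * rep b i
      = u j * rep b j + ∑ i ∈ s.erase j, u i * rep b i :=
    (Finset.add_sum_erase _ (fun i => u i * rep b i) hjs).symm
  have hbound1 : ∑ i ∈ s.erase j, u i ≤ ∑ i ∈ s.erase j, u i * rep b i := by
    apply Finset.sum_le_sum
    intro i hi
    have hi1 : 1 ≤ i := by
      have := (Finset.mem_erase.mp (Finset.mem_of_mem_erase hi)).1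
      omega
    have := one_le_rep b i hi1
    nlinarith
  have hbound2 : u j + b ≤ u j * rep b j := by
    have h1 : b + 1 ≤ rep b j := add_one_le_rep b j hj2
    have h2 : 1 ≤ u j := Nat.one_le_iff_ne_zero.mpr hju
    calc u j + b ≤ u j + u j * b := by nlinarith
    _ = u j * (b + 1) := by ring
    _ ≤ u j * rep b j := Nat.mul_le_mul_left _ h1
  omega

/-- Peeling identity for the degree under shift. -/
lemma shift_p (n : ℕ) (u : ℕ → ℕ) (hbd : ∀ i, n ≤ i → u i = 0) :
    (∑ i ∈ Finset.range n, u (i + 1)) + u 0 = ∑ i ∈ Finset.range n, u i := by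
  have h1 : ∑ i ∈ Finset.range (n + 1), u i
      = (∑ i ∈ Finset.range n, u (i + 1)) + u 0 := Finset.sum_range_succ' u n
  have h2 : ∑ i ∈ Finset.range (n + 1), u i
      = (∑ i ∈ Finset.range n, u i) + u n := Finset.sum_range_succ u n
  rw [hbd n le_rfl] at h2
  omega

/-- Peeling identity for the weight under shift. -/
lemma shift_q (b n : ℕ) (u : ℕ → ℕ) (hbd : ∀ i, n ≤ i → u i = 0) :
    ∑ i ∈ Finset.range n, u i * rep b i
      = b * (∑ i ∈ Finset.range n, u (i + 1) * rep b i)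
        + ∑ i ∈ Finset.range n, u (i + 1) := by
  have h1 : ∑ i ∈ Finset.range (n + 1), u i * rep b i
      = (∑ i ∈ Finset.range n, u (i + 1) * rep b (i + 1)) + u 0 * rep b 0 :=
    Finset.sum_range_succ' (fun i => u i * rep b i) n
  have h2 : ∑ i ∈ Finset.range (n + 1), u i * rep b i
      = (∑ i ∈ Finset.range n, u i * rep b i) + u n * rep b n :=
    Finset.sum_range_succ (fun i => u i * rep b i) n
  rw [hbd n le_rfl] at h2
  have h3 : ∑ i ∈ Finset.range n, u (i + 1) * rep b (i + 1)
      = b * (∑ i ∈ Finset.range n, u (i + 1) * rep b i)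
        + ∑ i ∈ Finset.range n, u (i + 1) := by
    rw [Finset.mul_sum, ← Finset.sum_add_distrib]
    apply Finset.sum_congr rfl
    intro i _
    rw [rep_succ]; ring
  rw [rep_zero] at h1
  omega

lemma sum_lowsupp (n : ℕ) (hn : 2 ≤ n) (g : ℕ → ℕ) (hg : ∀ j, 2 ≤ j → g j = 0) :
    ∑ i ∈ Finset.range n, g i = g 0 + g 1 := by
  rw [← Finset.sum_subset (Finset.range_subset_range.mpr hn)
    (fun x _ hx => hg x (by simp [Finset.mem_range] at hx; omega))]
  rw [Finset.sum_range_succ, Finset.sum_range_one]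

/-- Key combinatorial injectivity lemma. -/
lemma key (b n : ℕ) (hb : 0 < b) (hn : 2 ≤ n) :
    ∀ q p : ℕ, ∀ u u' : ℕ → ℕ,
    (∀ i, n ≤ i → u i = 0) → (∀ i, n ≤ i → u' i = 0) →
    (∀ i j, i + 2 ≤ j → b ≤ u i → u j = 0) →
    (∀ i j, i + 2 ≤ j → b ≤ u' i → u' j = 0) →
    (∑ i ∈ Finset.range n, u i = p) → (∑ i ∈ Finset.range n, u' i = p) →
    (∑ i ∈ Finset.range n, u i * rep b i = q) →
    (∑ i ∈ Finset.range n, u' i * rep b i = q) →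
    ∀ i, u i = u' i := by
  intro q
  induction q using Nat.strong_induction_on with
  | _ q IH =>
    intro p u u' hbd hbd' hstd hstd' hp hp' hq hq'
    rcases le_or_gt q p with hle | hlt
    · -- low case: all support in {0,1}
      have hA : ∀ j, 2 ≤ j → u j = 0 := by
        by_contra hcon; push_neg at hcon; obtain ⟨j, hj2, hju⟩ := hcon
        have := lt_q b n hb u hbd hstd j hj2 hju; omega
      have hA' : ∀ j, 2 ≤ j → u' j = 0 := by
        by_contra hcon; push_neg at hcon; obtain ⟨j, hj2, hju⟩ := hcon
        have := lt_q b n hb u' hbd' hstd' j hj2 hju; omega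
      have h1 : u 0 + u 1 = p := by
        rw [← hp, sum_lowsupp n hn u hA]
      have h1' : u' 0 + u' 1 = p := by
        rw [← hp', sum_lowsupp n hn u' hA']
      have h2 : u 1 = q := by
        have hs := sum_lowsupp n hn (fun i => u i * rep b i)
          (fun j hj => by simp [hA j hj])
        simp only [rep_zero, rep_one, Nat.mul_zero, Nat.mul_one] at hs
        omega
      have h2' : u' 1 = q := by
        have hs := sum_lowsupp n hn (fun i => u' i * rep b i)
          (fun j hj => by simp [hA' j hj])
        simp only [rep_zero, rep_one, Nat.mul_zero, Nat.mul_one] at hs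
        omega
      intro i
      match i with
      | 0 => omega
      | 1 => omega
      | (j+2) => rw [hA (j+2) (by omega), hA' (j+2) (by omega)]
    · -- high case: both have support at index ≥ 2
      have hEx : ∃ j, 2 ≤ j ∧ u j ≠ 0 := by
        by_contra hcon; push_neg at hcon
        have hA : ∀ j, 2 ≤ j → u j = 0 := fun j hj => hcon j hj
        have h1 : u 0 + u 1 = p := by rw [← hp, sum_lowsupp n hn u hA]
        have h2 : u 1 = q := by
          have hs := sum_lowsupp n hn (fun i => u i * rep b i)
            (fun j hj => by simp [hA j hj])
          simp only [rep_zero, rep_one, Nat.mul_zero, Nat.mul_one] at hs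
          omega
        omega
      have hEx' : ∃ j, 2 ≤ j ∧ u' j ≠ 0 := by
        by_contra hcon; push_neg at hcon
        have hA : ∀ j, 2 ≤ j → u' j = 0 := fun j hj => hcon j hj
        have h1 : u' 0 + u' 1 = p := by rw [← hp', sum_lowsupp n hn u' hA]
        have h2 : u' 1 = q := by
          have hs := sum_lowsupp n hn (fun i => u' i * rep b i)
            (fun j hj => by simp [hA j hj])
          simp only [rep_zero, rep_one, Nat.mul_zero, Nat.mul_one] at hs
          omega
        omega
      obtain ⟨j₀, hj₀2, hj₀u⟩ := hEx
      obtain ⟨j₀', hj₀2', hj₀u'⟩ := hEx'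
      have hu0 : u 0 < b := by
        by_contra hc; exact hj₀u (hstd 0 j₀ (by omega) (le_of_not_gt hc))
      have hu0' : u' 0 < b := by
        by_contra hc; exact hj₀u' (hstd' 0 j₀' (by omega) (le_of_not_gt hc))
      -- shift identities
      have hsp := shift_p n u hbd
      have hsp' := shift_p n u' hbd'
      have hsq := shift_q b n u hbd
      have hsq' := shift_q b n u' hbd'
      -- T ≥ 1
      have hT1 : 1 ≤ ∑ i ∈ Finset.range n, u (i + 1) := by
        have hj₀n : j₀ < n := by
          by_contra hc; exact hj₀u (hbd j₀ (le_of_not_gt hc))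
        have hmem : j₀ - 1 ∈ Finset.range n := Finset.mem_range.mpr (by omega)
        have hle2 : u (j₀ - 1 + 1) ≤ ∑ i ∈ Finset.range n, u (i + 1) :=
          Finset.single_le_sum (f := fun i => u (i + 1))
            (fun i _ => Nat.zero_le _) hmem
        have heq : j₀ - 1 + 1 = j₀ := by omega
        rw [heq] at hle2
        omega
      -- u 0 = u' 0 and the shifted weights agree
      have hmain : u 0 = u' 0 ∧
          (∑ i ∈ Finset.range n, u (i + 1) * rep b i)
            = ∑ i ∈ Finset.range n, u' (i + 1) * rep b i := by
        rcases lt_trichotomy (∑ i ∈ Finset.range n, u (i + 1) * rep b i)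
          (∑ i ∈ Finset.range n, u' (i + 1) * rep b i) with hlt2 | heq2 | hlt2
        · exfalso
          have h1 : b * ((∑ i ∈ Finset.range n, u (i + 1) * rep b i) + 1)
              ≤ b * (∑ i ∈ Finset.range n, u' (i + 1) * rep b i) :=
            Nat.mul_le_mul_left b (by omega)
          rw [Nat.mul_add, Nat.mul_one] at h1
          omega
        · refine ⟨?_, heq2⟩
          rw [heq2] at hsq; omega
        · exfalso
          have h1 : b * ((∑ i ∈ Finset.range n, u' (i + 1) * rep b i) + 1)
              ≤ b * (∑ i ∈ Finset.range n, u (i + 1) * rep b i) :=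
            Nat.mul_le_mul_left b (by omega)
          rw [Nat.mul_add, Nat.mul_one] at h1
          omega
      obtain ⟨hu00, hQQ⟩ := hmain
      -- shifted weight < q
      have hQvlt : (∑ i ∈ Finset.range n, u (i + 1) * rep b i) < q := by
        have hle3 : (∑ i ∈ Finset.range n, u (i + 1) * rep b i)
            ≤ b * (∑ i ∈ Finset.range n, u (i + 1) * rep b i) :=
          Nat.le_mul_of_pos_left _ hb
        omega
      -- apply IH to shifted functions
      have hind := IH (∑ i ∈ Finset.range n, u (i + 1) * rep b i) hQvlt
        (∑ i ∈ Finset.range n, u (i + 1))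
        (fun i => u (i + 1)) (fun i => u' (i + 1))
        (fun i hi => hbd (i + 1) (by omega))
        (fun i hi => hbd' (i + 1) (by omega))
        (fun i j hij hbi => hstd (i + 1) (j + 1) (by omega) hbi)
        (fun i j hij hbi => hstd' (i + 1) (j + 1) (by omega) hbi)
        (by show (∑ i ∈ Finset.range n, u (i + 1)) = _; rfl)
        (by show (∑ i ∈ Finset.range n, u' (i + 1)) = _; omega)
        (by show (∑ i ∈ Finset.range n, u (i + 1) * rep b i) = _; rfl)
        (by show (∑ i ∈ Finset.range n, u' (i + 1) * rep b i) = _; omega)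
      intro i
      match i with
      | 0 => exact hu00
      | (i+1) => exact hind i


open MvPolynomial

variable {K : Type*} [Field K]

lemma xv_eq {n : ℕ} (m : ℕ) (h : m - 1 < n) :
    xv K n m = X (⟨m - 1, h⟩ : Fin n) := dif_pos h

/-- A monomial exponent is standard if no `x_i^b · x_j` with `i + 2 ≤ j` divides it. -/
def StdM (b : ℕ) {n : ℕ} (u : Fin n →₀ ℕ) : Prop :=
  ∀ i j : Fin n, (i : ℕ) + 2 ≤ (j : ℕ) → b ≤ u i → u j = 0

/-- A polynomial is standard if all monomials in its support are. -/
def StdP (b : ℕ) {n : ℕ} (g : MvPolynomial (Fin n) K) : Prop :=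
  ∀ u ∈ g.support, StdM b u

/-- Termination measure for reduction. -/
def mu (b : ℕ) {n : ℕ} (u : Fin n →₀ ℕ) : ℕ :=
  ∑ i : Fin n, u i * (b + 2) ^ (i : ℕ)

lemma mu_add {b n : ℕ} (u v : Fin n →₀ ℕ) : mu b (u + v) = mu b u + mu b v := by
  simp [mu, add_mul, Finset.sum_add_distrib]

lemma mu_single {b n : ℕ} (t : Fin n) (c : ℕ) :
    mu b (Finsupp.single t c) = c * (b + 2) ^ (t : ℕ) := by
  unfold mu
  rw [Finset.sum_eq_single t]
  · rw [Finsupp.single_apply, if_pos rfl]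
  · intro i _ hne
    rw [Finsupp.single_apply, if_neg (by exact fun h => hne h.symm)]
    ring
  · intro h; exact absurd (Finset.mem_univ t) h

lemma minor_mem {b n : ℕ} (i j : Fin n) (hij : (i : ℕ) + 2 ≤ (j : ℕ))
    (hi1 : (i : ℕ) + 1 < n) (hj1 : (j : ℕ) - 1 < n) :
    (X i ^ b * X j
      - X (⟨(i : ℕ) + 1, hi1⟩ : Fin n) * X (⟨(j : ℕ) - 1, hj1⟩ : Fin n) ^ b)
      ∈ Ideal.span (minorsY K b n) := by
  have hjn := j.isLt
  have hmem : xv K n ((i : ℕ) + 1 + 1) * xv K n (j : ℕ) ^ b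
      - xv K n ((i : ℕ) + 1) ^ b * xv K n ((j : ℕ) + 1) ∈ minorsY K b n :=
    ⟨(i : ℕ) + 1, (j : ℕ), by omega, by omega, by omega, rfl⟩
  have e1 : xv K n ((i : ℕ) + 1) = X i := by
    rw [xv_eq _ (show (i:ℕ) + 1 - 1 < n by omega)]
    exact congrArg X (Fin.ext (show (i:ℕ) + 1 - 1 = (i:ℕ) by omega))
  have e2 : xv K n ((i : ℕ) + 1 + 1) = X (⟨(i : ℕ) + 1, hi1⟩ : Fin n) := by
    rw [xv_eq _ (show (i:ℕ) + 1 + 1 - 1 < n by omega)]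
    exact congrArg X (Fin.ext (show (i:ℕ) + 1 + 1 - 1 = (i:ℕ) + 1 by omega))
  have e3 : xv K n (j : ℕ) = X (⟨(j : ℕ) - 1, hj1⟩ : Fin n) := by
    rw [xv_eq _ (show (j:ℕ) - 1 < n by omega)]
  have e4 : xv K n ((j : ℕ) + 1) = X j := by
    rw [xv_eq _ (show (j:ℕ) + 1 - 1 < n by omega)]
    exact congrArg X (Fin.ext (show (j:ℕ) + 1 - 1 = (j:ℕ) by omega))
  rw [e1, e2, e3, e4] at hmem
  have hneg := neg_mem (Ideal.subset_span hmem)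
  convert hneg using 1
  ring


lemma reduce_monomial {b n : ℕ} :
    ∀ N : ℕ, ∀ u : Fin n →₀ ℕ, mu b u ≤ N →
    ∃ g : MvPolynomial (Fin n) K, StdP b g ∧
      (monomial u (1 : K)) - g ∈ Ideal.span (minorsY K b n) := by
  classical
  intro N
  induction N using Nat.strong_induction_on with
  | _ N IH =>
    intro u hmu
    by_cases hstd : StdM b u
    · refine ⟨monomial u 1, ?_, by simp⟩
      intro v hv
      have : v = u := by
        have h1 : ((monomial u (1:K)).support : Finset (Fin n →₀ ℕ)) = {u} := by
          rw [support_monomial, if_neg one_ne_zero]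
        rw [h1] at hv
        exact Finset.mem_singleton.mp hv
      rwa [this]
    · simp only [StdM, not_forall] at hstd
      obtain ⟨i, j, hij, hbi, hju⟩ := hstd
      have hi1 : (i : ℕ) + 1 < n := by have := j.isLt; omega
      have hj1 : (j : ℕ) - 1 < n := by have := j.isLt; omega
      set i' : Fin n := ⟨(i : ℕ) + 1, hi1⟩ with hi'
      set j' : Fin n := ⟨(j : ℕ) - 1, hj1⟩ with hj'
      set d : Fin n →₀ ℕ := Finsupp.single i b + Finsupp.single j 1 with hd
      set d' : Fin n →₀ ℕ := Finsupp.single i' 1 + Finsupp.single j' b with hd'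
      have hij_ne : i ≠ j := fun h => by rw [h] at hij; omega
      have hle : d ≤ u := by
        rw [Finsupp.le_def]
        intro t
        rw [hd]
        rcases eq_or_ne i t with rfl | hit
        · rw [Finsupp.add_apply, Finsupp.single_apply, if_pos rfl,
            Finsupp.single_apply, if_neg (fun h => hij_ne h.symm)]
          omega
        · rcases eq_or_ne j t with rfl | hjt
          · rw [Finsupp.add_apply, Finsupp.single_apply, if_neg hit,
              Finsupp.single_apply, if_pos rfl]
            omega
          · rw [Finsupp.add_apply, Finsupp.single_apply, if_neg hit,
              Finsupp.single_apply, if_neg hjt]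
            omega
      have hu_eq : (u - d) + d = u := tsub_add_cancel_of_le hle
      set u₂ : Fin n →₀ ℕ := (u - d) + d' with hu₂
      have emon1 : (monomial u (1 : K))
          = monomial (u - d) 1 * (X i ^ b * X j) := by
        rw [X_pow_eq_monomial, show (X j : MvPolynomial (Fin n) K)
            = monomial (Finsupp.single j 1) 1 by rw [← pow_one (X j), X_pow_eq_monomial],
          monomial_mul, monomial_mul, ← hd, hu_eq]
        norm_num
      have emon2 : (monomial u₂ (1 : K))
          = monomial (u - d) 1 * (X i' * X j' ^ b) := by
        rw [X_pow_eq_monomial, show (X i' : MvPolynomial (Fin n) K)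
            = monomial (Finsupp.single i' 1) 1 by rw [← pow_one (X i'), X_pow_eq_monomial],
          monomial_mul, monomial_mul, ← hd', ← hu₂]
        norm_num
      have hdiff : (monomial u (1 : K)) - monomial u₂ 1
          = monomial (u - d) 1 * (X i ^ b * X j - X i' * X j' ^ b) := by
        rw [mul_sub, ← emon1, ← emon2]
      have hmem : (monomial u (1 : K)) - monomial u₂ 1 ∈ Ideal.span (minorsY K b n) := by
        rw [hdiff]
        exact Ideal.mul_mem_left _ _ (minor_mem i j hij hi1 hj1)
      -- measure decreases
      have hmu2 : mu b u₂ < mu b u := by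
        have h1 : mu b u = mu b (u - d) + mu b d := by rw [← hu_eq, mu_add, hu_eq]
        have h2 : mu b u₂ = mu b (u - d) + mu b d' := by rw [hu₂, mu_add]
        have h3 : mu b d = b * (b + 2) ^ (i : ℕ) + 1 * (b + 2) ^ (j : ℕ) := by
          rw [hd, mu_add, mu_single, mu_single]
        have h4 : mu b d' = 1 * (b + 2) ^ ((i : ℕ) + 1) + b * (b + 2) ^ ((j : ℕ) - 1) := by
          rw [hd', mu_add, mu_single, mu_single]
        have h5 : (b + 2) ^ ((i : ℕ) + 1) ≤ (b + 2) ^ ((j : ℕ) - 1) :=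
          Nat.pow_le_pow_right (by omega) (by omega)
        have h6 : (b + 2) ^ (j : ℕ) = (b + 2) ^ ((j : ℕ) - 1) * (b + 2) := by
          rw [← pow_succ]
          congr 1
          omega
        have h7 : 0 < (b + 2) ^ ((j : ℕ) - 1) := Nat.pow_pos (by omega)
        have h8 : mu b d' < mu b d := by
          calc mu b d' = (b + 2) ^ ((i : ℕ) + 1) + b * (b + 2) ^ ((j : ℕ) - 1) := by
                rw [h4]; ring
          _ ≤ (b + 2) ^ ((j : ℕ) - 1) + b * (b + 2) ^ ((j : ℕ) - 1) := by omega
          _ = (b + 1) * (b + 2) ^ ((j : ℕ) - 1) := by ring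
          _ < (b + 2) * (b + 2) ^ ((j : ℕ) - 1) := by nlinarith
          _ = (b + 2) ^ (j : ℕ) := by rw [h6]; ring
          _ ≤ mu b d := by rw [h3]; omega
        omega
      obtain ⟨g, hg1, hg2⟩ := IH (mu b u₂) (by omega) u₂ le_rfl
      refine ⟨g, hg1, ?_⟩
      have : (monomial u (1:K)) - g
          = ((monomial u (1:K)) - monomial u₂ 1) + ((monomial u₂ (1:K)) - g) := by ring
      rw [this]
      exact Ideal.add_mem _ hmem hg2

lemma reduce {b n : ℕ} (f : MvPolynomial (Fin n) K) :
    ∃ g : MvPolynomial (Fin n) K, StdP b g ∧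
      f - g ∈ Ideal.span (minorsY K b n) := by
  classical
  have hmono : ∀ u : Fin n →₀ ℕ, ∃ g : MvPolynomial (Fin n) K, StdP b g ∧
      (monomial u (1:K)) - g ∈ Ideal.span (minorsY K b n) :=
    fun u => reduce_monomial (mu b u) u le_rfl
  choose G hG1 hG2 using hmono
  refine ⟨∑ u ∈ f.support, f.coeff u • G u, ?_, ?_⟩
  · intro v hv
    obtain ⟨u, hu, hvu⟩ := Finset.mem_biUnion.mp (support_sum hv)
    exact hG1 u v (Finsupp.support_smul hvu)
  · have hrepr : f = ∑ u ∈ f.support, monomial u (f.coeff u) :=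
      (support_sum_monomial_coeff f).symm
    nth_rewrite 1 [hrepr]
    rw [← Finset.sum_sub_distrib]
    apply Ideal.sum_mem
    intro u hu
    have heq : (monomial u (f.coeff u)) - f.coeff u • G u
        = C (f.coeff u) * ((monomial u (1:K)) - G u) := by
      rw [mul_sub, smul_eq_C_mul, C_mul_monomial, mul_one]
    rw [heq]
    exact Ideal.mul_mem_left _ _ (hG2 u)


/-- The toric parametrization map `x_i ↦ s·t^{rep b (i-1)}`. -/
noncomputable def phi (b n : ℕ) (K : Type*) [Field K] :
    MvPolynomial (Fin n) K →ₐ[K] MvPolynomial (Fin 2) K :=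
  aeval (fun i : Fin n => X 0 * X 1 ^ rep b (i : ℕ))

def pval {n : ℕ} (u : Fin n →₀ ℕ) : ℕ := ∑ i, u i

def qval (b : ℕ) {n : ℕ} (u : Fin n →₀ ℕ) : ℕ := ∑ i, u i * rep b (i : ℕ)

lemma phi_monomial {b n : ℕ} (u : Fin n →₀ ℕ) (c : K) :
    phi b n K (monomial u c)
      = monomial (Finsupp.single 0 (pval u) + Finsupp.single 1 (qval b u)) c := by
  rw [phi, aeval_monomial, Finsupp.prod_fintype _ _ (fun i => pow_zero _)]
  have hprod : (∏ i : Fin n, ((X 0 * X 1 ^ rep b (i : ℕ) : MvPolynomial (Fin 2) K)) ^ u i)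
      = (X 0 : MvPolynomial (Fin 2) K) ^ pval u * X 1 ^ qval b u := by
    rw [Finset.prod_congr rfl (fun i _ => by
      rw [mul_pow, ← pow_mul, mul_comm (rep b (i : ℕ)) (u i)])]
    rw [Finset.prod_mul_distrib, Finset.prod_pow_eq_pow_sum, Finset.prod_pow_eq_pow_sum]
    rfl
  rw [hprod, algebraMap_eq, X_pow_eq_monomial, X_pow_eq_monomial, C_apply,
    monomial_mul, monomial_mul, zero_add]
  norm_num

lemma phi_minors {b n : ℕ} (s : MvPolynomial (Fin n) K) (hs : s ∈ minorsY K b n) :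
    phi b n K s = 0 := by
  obtain ⟨j, l, hj, hjl, hl, rfl⟩ := hs
  have hn3 : 3 ≤ n := by omega
  rw [xv_eq (j + 1) (by omega), xv_eq l (by omega), xv_eq j (by omega),
    xv_eq (l + 1) (by omega)]
  rw [map_sub, map_mul, map_mul, map_pow, map_pow]
  rw [phi]
  simp only [aeval_X]
  have hj' : rep b (j + 1 - 1) = b * rep b (j - 1) + 1 := by
    have h := rep_succ b (j - 1)
    rw [Nat.sub_add_cancel hj] at h
    rw [Nat.add_sub_cancel, h]
  have hl' : rep b (l + 1 - 1) = b * rep b (l - 1) + 1 := by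
    have h := rep_succ b (l - 1)
    rw [Nat.sub_add_cancel (by omega : 1 ≤ l)] at h
    rw [Nat.add_sub_cancel, h]
  rw [hj', hl']
  ring

/-- Extension of a `Fin n`-indexed exponent vector to `ℕ`. -/
def ext0 {n : ℕ} (u : Fin n →₀ ℕ) : ℕ → ℕ := fun t => if h : t < n then u ⟨t, h⟩ else 0

lemma ext0_ge {n : ℕ} (u : Fin n →₀ ℕ) (t : ℕ) (h : n ≤ t) : ext0 u t = 0 :=
  dif_neg (not_lt.mpr h)

lemma ext0_lt {n : ℕ} (u : Fin n →₀ ℕ) (t : ℕ) (h : t < n) : ext0 u t = u ⟨t, h⟩ :=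
  dif_pos h

lemma ext0_fin {n : ℕ} (u : Fin n →₀ ℕ) (t : Fin n) : ext0 u (t : ℕ) = u t :=
  dif_pos t.isLt

lemma std_inj {b n : ℕ} (hb : 0 < b) (hn : 2 ≤ n) (u v : Fin n →₀ ℕ)
    (hu : StdM b u) (hv : StdM b v) (hp : pval u = pval v) (hq : qval b u = qval b v) :
    u = v := by
  have hstdu : ∀ t s : ℕ, t + 2 ≤ s → b ≤ ext0 u t → ext0 u s = 0 := by
    intro t s hts hbt
    by_cases h : t < n
    · rw [ext0_lt u t h] at hbt
      by_cases h2 : s < n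
      · rw [ext0_lt u s h2]
        exact hu ⟨t, h⟩ ⟨s, h2⟩ hts hbt
      · exact ext0_ge u s (le_of_not_gt h2)
    · rw [ext0_ge u t (le_of_not_gt h)] at hbt
      omega
  have hstdv : ∀ t s : ℕ, t + 2 ≤ s → b ≤ ext0 v t → ext0 v s = 0 := by
    intro t s hts hbt
    by_cases h : t < n
    · rw [ext0_lt v t h] at hbt
      by_cases h2 : s < n
      · rw [ext0_lt v s h2]
        exact hv ⟨t, h⟩ ⟨s, h2⟩ hts hbt
      · exact ext0_ge v s (le_of_not_gt h2)
    · rw [ext0_ge v t (le_of_not_gt h)] at hbt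
      omega
  have hsum_u : ∑ t ∈ Finset.range n, ext0 u t = pval u := by
    rw [← Fin.sum_univ_eq_sum_range (ext0 u) n]
    exact Finset.sum_congr rfl (fun i _ => ext0_fin u i)
  have hsum_v : ∑ t ∈ Finset.range n, ext0 v t = pval v := by
    rw [← Fin.sum_univ_eq_sum_range (ext0 v) n]
    exact Finset.sum_congr rfl (fun i _ => ext0_fin v i)
  have hw_u : ∑ t ∈ Finset.range n, ext0 u t * rep b t = qval b u := by
    rw [← Fin.sum_univ_eq_sum_range (fun t => ext0 u t * rep b t) n]
    exact Finset.sum_congr rfl (fun i _ => by rw [ext0_fin u i])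
  have hw_v : ∑ t ∈ Finset.range n, ext0 v t * rep b t = qval b v := by
    rw [← Fin.sum_univ_eq_sum_range (fun t => ext0 v t * rep b t) n]
    exact Finset.sum_congr rfl (fun i _ => by rw [ext0_fin v i])
  have hkey := key b n hb hn (qval b u) (pval u) (ext0 u) (ext0 v)
    (fun t ht => ext0_ge u t ht) (fun t ht => ext0_ge v t ht)
    hstdu hstdv hsum_u (by rw [hsum_v, hp]) hw_u (by rw [hw_v, hq])
  ext t
  have h := hkey (t : ℕ)
  rwa [ext0_fin u t, ext0_fin v t] at h

lemma stdp_zero {b n : ℕ} (hb : 0 < b) (hn : 2 ≤ n) (g : MvPolynomial (Fin n) K)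
    (hg : StdP b g) (h0 : phi b n K g = 0) : g = 0 := by
  classical
  by_contra hne
  obtain ⟨u₀, hu₀⟩ : g.support.Nonempty :=
    Finset.nonempty_iff_ne_empty.mpr (fun h => hne (support_eq_empty.mp h))
  have hrep : phi b n K g = ∑ u ∈ g.support,
      monomial (Finsupp.single 0 (pval u) + Finsupp.single 1 (qval b u)) (coeff u g) := by
    nth_rewrite 1 [← support_sum_monomial_coeff g]
    rw [map_sum]
    exact Finset.sum_congr rfl fun u _ => phi_monomial u (coeff u g)
  have hco : coeff (Finsupp.single 0 (pval u₀) + Finsupp.single 1 (qval b u₀))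
      (phi b n K g) = coeff u₀ g := by
    rw [hrep, coeff_sum, Finset.sum_eq_single u₀]
    · rw [coeff_monomial, if_pos rfl]
    · intro u hu hne2
      rw [coeff_monomial, if_neg]
      intro heq
      have hp : pval u = pval u₀ := by
        have h := DFunLike.congr_fun heq (0 : Fin 2)
        simpa using h
      have hq : qval b u = qval b u₀ := by
        have h := DFunLike.congr_fun heq (1 : Fin 2)
        simpa using h
      exact hne2 (std_inj hb hn u u₀ (hg u hu) (hg u₀ hu₀) hp hq)
    · intro habs; exact absurd hu₀ habs
  rw [h0] at hco
  simp only [coeff_zero] at hco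
  exact (mem_support_iff.mp hu₀) hco.symm

end Stmt11Aux

theorem stmt11 (a b n : ℕ) (ha : 0 < a) (hb : 0 < b) (hn : 3 < n) (K : Type*) [Field K]
    (m : ℕ) (hm1 : 1 ≤ m) (hm2 : m ≤ n) (e : ℕ) (f : MvPolynomial (Fin n) K)
    (h : xv K n m ^ e * f ∈ Ideal.span (minorsY K b n)) :
    f ∈ Ideal.span (minorsY K b n) := by
  classical
  open MvPolynomial Stmt11Aux in
  obtain ⟨g, hgstd, hfg⟩ := reduce (b := b) f
  have hge : xv K n m ^ e * g ∈ Ideal.span (minorsY K b n) := by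
    have h2 : xv K n m ^ e * (f - g) ∈ Ideal.span (minorsY K b n) :=
      Ideal.mul_mem_left _ _ hfg
    have heq : xv K n m ^ e * g = xv K n m ^ e * f - xv K n m ^ e * (f - g) := by ring
    rw [heq]
    exact Ideal.sub_mem _ h h2
  have hker : Stmt11Aux.phi b n K (xv K n m ^ e * g) = 0 := by
    have hle : Ideal.span (minorsY K b n)
        ≤ RingHom.ker (Stmt11Aux.phi b n K).toRingHom :=
      Ideal.span_le.mpr (fun s hs => Stmt11Aux.phi_minors s hs)
    exact hle hge
  rw [map_mul, map_pow] at hker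
  have hxv : Stmt11Aux.phi b n K (xv K n m) ≠ 0 := by
    rw [Stmt11Aux.xv_eq m (by omega), Stmt11Aux.phi, MvPolynomial.aeval_X]
    exact mul_ne_zero (MvPolynomial.X_ne_zero _)
      (pow_ne_zero _ (MvPolynomial.X_ne_zero _))
  have hg0 : g = 0 := by
    apply Stmt11Aux.stdp_zero hb (by omega) g hgstd
    rcases mul_eq_zero.mp hker with h' | h'
    · exact absurd h' (pow_ne_zero _ hxv)
    · exact h'
  rw [hg0, sub_zero] at hfg
  exact hfg
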